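/- Suppose a polynomial f(x_1, ..., x_n) over a field F has total degree at most c_1 + c_2 + ... + c_n, where the c_i are non-negative integers, and let C denote the coefficient of the monomial x_1^{c_1} x_2^{c_2} ... x_n^{c_n} in f (possibly C = 0). Let A_1, ..., A_n be finite subsets of F with |A_i| = c_i + 1 for each i, and set φ_i(x) = ∏_{α ∈ A_i} (x - α). Then C = Σ_{α_1 ∈ A_1, ..., α_n ∈ A_n} f(α_1, ..., α_n) / (φ_1'(α_1) ⋯ φ_n'(α_n)). -/

import Mathlib

open Polynomial Finset


lemma lagrange_key {F : Type*} [Field F] (A : Finset F) (m d : ℕ)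
    (hA : A.card = m + 1) (hd : d ≤ m) :
    ∑ a ∈ A, a ^ d * (Polynomial.eval a (Polynomial.derivative (∏ b ∈ A, (X - C b))))⁻¹ =
      if d = m then 1 else 0 := by
  classical
  have hinj : Set.InjOn (id : F → F) A := fun x _ y _ h => h
  have hnodal : Lagrange.nodal A (id : F → F) = ∏ b ∈ A, (X - C b) := by
    simp [Lagrange.nodal_eq]
  have hdeg : (X ^ d : F[X]).degree < A.card := by
    rw [degree_X_pow, hA]
    exact_mod_cast Nat.lt_succ_of_le hd
  have hX := Lagrange.eq_interpolate hinj hdeg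
  have key := congrArg (fun p : F[X] => p.coeff m) hX
  simp only [Lagrange.interpolate_apply] at key
  rw [Polynomial.finset_sum_coeff] at key
  have hb : ∀ a ∈ A, (Polynomial.C (Polynomial.eval (id a) (X ^ d : F[X])) *
      Lagrange.basis A id a).coeff m = a ^ d * (Polynomial.eval a (Polynomial.derivative (∏ b ∈ A, (X - C b))))⁻¹ := by
    intro a ha
    rw [Polynomial.coeff_C_mul, Lagrange.basis_eq_prod_sub_inv_mul_nodal_div ha,
      ← Lagrange.nodal_erase_eq_nodal_div ha, Polynomial.coeff_C_mul]
    have hm : (Lagrange.nodal (A.erase a) (id : F → F)).natDegree = m := by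
      rw [Lagrange.natDegree_nodal, Finset.card_erase_of_mem ha, hA]; rfl
    have hc : (Lagrange.nodal (A.erase a) (id : F → F)).coeff m = 1 := by
      rw [← hm]; exact Lagrange.nodal_monic.coeff_natDegree
    rw [hc, mul_one, Lagrange.nodalWeight_eq_eval_derivative_nodal ha, hnodal]
    simp
  rw [Finset.sum_congr rfl hb] at key
  rw [← key, Polynomial.coeff_X_pow]
  simp [eq_comm]



/-- Combinatorial Nullstellensatz, coefficient formula. -/
theorem combinatorial_nullstellensatz_coeff (F : Type*) [Field F] (n : ℕ)
    (c : Fin n → ℕ) (f : MvPolynomial (Fin n) F)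
    (hdeg : f.totalDegree ≤ ∑ i, c i)
    (A : Fin n → Finset F) (hA : ∀ i, (A i).card = c i + 1) :
    MvPolynomial.coeff (Finsupp.equivFunOnFinite.symm c) f =
      ∑ α ∈ Fintype.piFinset A,
        MvPolynomial.eval α f /
          ∏ i, Polynomial.eval (α i)
            (Polynomial.derivative
              (∏ a ∈ A i, (Polynomial.X - Polynomial.C a))) := by
  classical
  set c' : Fin n →₀ ℕ := Finsupp.equivFunOnFinite.symm c with hc'
  have hc'app : ∀ i, c' i = c i := fun i => rfl
  -- rewrite RHS
  have step : ∀ α ∈ Fintype.piFinset A,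
      MvPolynomial.eval α f /
          ∏ i, Polynomial.eval (α i)
            (Polynomial.derivative (∏ a ∈ A i, (X - C a)))
      = ∑ d ∈ f.support, MvPolynomial.coeff d f *
          ∏ i, (α i ^ d i *
            (Polynomial.eval (α i) (Polynomial.derivative (∏ a ∈ A i, (X - C a))))⁻¹) := by
    intro α _
    rw [div_eq_mul_inv, ← Finset.prod_inv_distrib, MvPolynomial.eval_eq', Finset.sum_mul]
    refine Finset.sum_congr rfl fun d _ => ?_
    rw [mul_assoc, ← Finset.prod_mul_distrib]
  rw [Finset.sum_congr rfl step, Finset.sum_comm]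
  have inner : ∀ d ∈ f.support,
      (∑ α ∈ Fintype.piFinset A, MvPolynomial.coeff d f *
        ∏ i, (α i ^ d i *
          (Polynomial.eval (α i) (Polynomial.derivative (∏ a ∈ A i, (X - C a))))⁻¹))
      = if d = c' then MvPolynomial.coeff d f else 0 := by
    intro d hd
    rw [← Finset.mul_sum,
      ← Finset.prod_univ_sum A (fun i a => a ^ d i *
        (Polynomial.eval a (Polynomial.derivative (∏ b ∈ A i, (X - C b))))⁻¹)]
    have hsum : (∑ i, d i) ≤ ∑ i, c i := by
      refine le_trans ?_ hdeg
      have := MvPolynomial.le_totalDegree hd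
      rwa [Finsupp.sum_fintype _ _ (fun _ => rfl)] at this
    by_cases hdc : d = c'
    · have hone : ∀ i ∈ (Finset.univ : Finset (Fin n)),
          (∑ a ∈ A i, a ^ d i *
            (Polynomial.eval a (Polynomial.derivative (∏ b ∈ A i, (X - C b))))⁻¹) = 1 := by
        intro i _
        have hdi : d i = c i := by rw [hdc, hc'app i]
        rw [hdi, lagrange_key (A i) (c i) (c i) (hA i) le_rfl, if_pos rfl]
      rw [Finset.prod_congr rfl hone, if_pos hdc]
      simp
    · have hex : ∃ i, d i < c i := by
        by_contra h
        push_neg at h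
        apply hdc
        have heq : ∀ i ∈ (Finset.univ : Finset (Fin n)), c i = d i :=
          (Finset.sum_eq_sum_iff_of_le (fun i _ => h i)).mp
            (le_antisymm (le_trans hsum (le_refl _)) (Finset.sum_le_sum (fun i _ => h i))).symm
        ext i
        rw [hc'app i, (heq i (Finset.mem_univ i)).symm]
      obtain ⟨i, hi⟩ := hex
      have hz : (∑ a ∈ A i, a ^ d i *
          (Polynomial.eval a (Polynomial.derivative (∏ b ∈ A i, (X - C b))))⁻¹) = 0 := by
        rw [lagrange_key (A i) (c i) (d i) (hA i) (le_of_lt hi), if_neg (Nat.ne_of_lt hi)]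
      rw [Finset.prod_eq_zero (Finset.mem_univ i) hz, mul_zero, if_neg hdc]
  rw [Finset.sum_congr rfl inner, Finset.sum_ite_eq' f.support c' (fun d => MvPolynomial.coeff d f)]
  by_cases h : c' ∈ f.support
  · simp [h]
  · simp [h, MvPolynomial.notMem_support_iff.mp h]
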